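/- Let k ≥ 1 be an integer, let ε ∈ {1, −1}, let x, y ∈ SL₂(ℂ), and set y₁ = x²·y·x^{2ε}·y⁻¹. Then tr(x² · y₁^{k}) = ( tr(x)² − 2 ) · Π_{j=1}^{k} ( tr(y₁) + 2·cos(2πj/(2k+1)) ). -/

import Mathlib

open Matrix Polynomial Finset Complex

namespace Lemma22

noncomputable def tr (g : Matrix.SpecialLinearGroup (Fin 2) ℂ) : ℂ :=
  Matrix.trace (g : Matrix (Fin 2) (Fin 2) ℂ)

lemma add_adjugate (A : Matrix (Fin 2) (Fin 2) ℂ) :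
    A + A.adjugate = (Matrix.trace A) • 1 := by
  rw [Matrix.adjugate_fin_two]
  ext i j
  fin_cases i <;> fin_cases j <;>
    simp [Matrix.trace_fin_two, Matrix.one_apply] <;> ring

lemma tr_mul_add_tr_mul_inv (g h : Matrix.SpecialLinearGroup (Fin 2) ℂ) :
    tr (g * h) + tr (g * h⁻¹) = tr g * tr h := by
  simp only [tr, Matrix.SpecialLinearGroup.coe_mul, Matrix.SpecialLinearGroup.coe_inv]
  rw [← Matrix.trace_add, ← Matrix.mul_add, add_adjugate]
  simp [mul_smul_comm, Matrix.trace_smul, mul_comm]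

lemma tr_conj (g h : Matrix.SpecialLinearGroup (Fin 2) ℂ) : tr (g * h * g⁻¹) = tr h := by
  unfold tr
  rw [Matrix.SpecialLinearGroup.coe_mul, Matrix.trace_mul_comm,
    ← Matrix.SpecialLinearGroup.coe_mul]
  congr 1
  group

lemma tr_one : tr 1 = 2 := by
  simp [tr]

lemma tr_inv (g : Matrix.SpecialLinearGroup (Fin 2) ℂ) : tr g⁻¹ = tr g := by
  have h := tr_mul_add_tr_mul_inv 1 g
  simp only [one_mul, tr_one] at h
  linear_combination h

lemma tr_sq (g : Matrix.SpecialLinearGroup (Fin 2) ℂ) : tr (g ^ 2) = tr g ^ 2 - 2 := by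
  have h := tr_mul_add_tr_mul_inv g g
  rw [mul_inv_cancel, tr_one, ← sq] at h
  linear_combination h

noncomputable def P : ℕ → Polynomial ℂ
  | 0 => 1
  | 1 => X - 1
  | (n+2) => X * P (n+1) - P n

lemma P_eval_key (z : ℂ) (hz : z ≠ 0) (n : ℕ) :
    z ^ n * (P n).eval (z + z⁻¹) * (z + 1) = z ^ (2*n+1) + 1 := by
  induction n using Nat.twoStepInduction with
  | zero => simp [P]
  | one => simp only [P, eval_sub, eval_X, eval_one, pow_one]; field_simp; ring
  | more n ih2 ih1 =>
    have e2 : (P (n+2)).eval (z + z⁻¹)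
        = (z + z⁻¹) * (P (n+1)).eval (z + z⁻¹) - (P n).eval (z + z⁻¹) := by
      simp [P]
    calc z ^ (n+2) * (P (n+2)).eval (z + z⁻¹) * (z + 1)
        = (z^2 + 1) * (z ^ (n+1) * (P (n+1)).eval (z + z⁻¹) * (z + 1))
          - z^2 * (z ^ n * (P n).eval (z + z⁻¹) * (z + 1)) := by
          rw [e2]; field_simp; ring
      _ = (z^2 + 1) * (z ^ (2*(n+1)+1) + 1) - z^2 * (z ^ (2*n+1) + 1) := by rw [ih1, ih2]
      _ = z ^ (2*(n+2)+1) + 1 := by ring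


lemma prod_root (n : ℕ) :
    ∀ w : ℂ, ∏ j ∈ range (2*n+1), (w + exp (2 * Real.pi * I / (2*n+1 : ℕ)) ^ j)
      = w ^ (2*n+1) + 1 := by
  intro w
  set ζ : ℂ := exp (2 * Real.pi * I / (2*n+1 : ℕ)) with hζdef
  have hm : (2*n+1 : ℕ) ≠ 0 := by omega
  have hζ : IsPrimitiveRoot ζ (2*n+1) := Complex.isPrimitiveRoot_exp _ hm
  have himg : nthRootsFinset (2*n+1) (1 : ℂ) = (range (2*n+1)).image (ζ ^ ·) := by
    ext a
    rw [mem_nthRootsFinset (by omega) (1 : ℂ)]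
    constructor
    · intro ha
      obtain ⟨i, hi, rfl⟩ := hζ.eq_pow_of_pow_eq_one ha
      exact Finset.mem_image.2 ⟨i, Finset.mem_range.2 hi, rfl⟩
    · rintro h
      obtain ⟨i, -, rfl⟩ := Finset.mem_image.1 h
      rw [← pow_mul, mul_comm, pow_mul, hζ.pow_eq_one, one_pow]
  have hpoly := Polynomial.X_pow_sub_one_eq_prod (R := ℂ) (n := 2*n+1) (by omega) hζ
  have heval : (-w) ^ (2*n+1) - 1 = ∏ j ∈ range (2*n+1), ((-w) - ζ ^ j) := by
    have h := congrArg (Polynomial.eval (-w)) hpoly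
    rw [himg, Finset.prod_image
      (fun i hi j hj h => hζ.injOn_pow (Finset.mem_coe.2 hi) (Finset.mem_coe.2 hj) h)] at h
    simpa [eval_prod] using h
  have hodd : Odd (2*n+1) := ⟨n, by ring⟩
  have h2 : ∏ j ∈ range (2*n+1), ((-w) - ζ ^ j)
      = (-1 : ℂ) ^ (2*n+1) * ∏ j ∈ range (2*n+1), (w + ζ ^ j) := by
    calc ∏ j ∈ range (2*n+1), ((-w) - ζ ^ j)
        = ∏ j ∈ range (2*n+1), ((-1) * (w + ζ ^ j)) :=
          Finset.prod_congr rfl fun j _ => by ring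
      _ = _ := by rw [Finset.prod_mul_distrib, Finset.prod_const, Finset.card_range]
  have key := heval.trans h2
  rw [hodd.neg_pow, hodd.neg_one_pow] at key
  linear_combination key

lemma prod_eval_key (n : ℕ) (z : ℂ) (hz : z ≠ 0) :
    z ^ n * (∏ j ∈ Icc 1 n, ((z + z⁻¹) +
        (exp (2 * Real.pi * I / (2*n+1 : ℕ)) ^ j +
         (exp (2 * Real.pi * I / (2*n+1 : ℕ)))⁻¹ ^ j))) * (z + 1)
      = z ^ (2*n+1) + 1 := by
  set ζ : ℂ := exp (2 * Real.pi * I / (2*n+1 : ℕ)) with hζdef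
  have hm : (2*n+1 : ℕ) ≠ 0 := by omega
  have hζ : IsPrimitiveRoot ζ (2*n+1) := Complex.isPrimitiveRoot_exp _ hm
  have hζ0 : ζ ≠ 0 := Complex.exp_ne_zero _
  have hcard : (Icc 1 n).card = n := by rw [Nat.card_Icc]; omega
  have step1 : z ^ n * (∏ j ∈ Icc 1 n, ((z + z⁻¹) + (ζ ^ j + ζ⁻¹ ^ j)))
      = ∏ j ∈ Icc 1 n, ((z + ζ ^ j) * (z + ζ⁻¹ ^ j)) := by
    rw [show z ^ n = ∏ _x ∈ Icc 1 n, z by rw [Finset.prod_const, hcard], ← Finset.prod_mul_distrib]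
    refine Finset.prod_congr rfl fun j _ => ?_
    have h1 : z * z⁻¹ = 1 := mul_inv_cancel₀ hz
    have h2 : ζ ^ j * ζ⁻¹ ^ j = 1 := by
      rw [← mul_pow, mul_inv_cancel₀ hζ0, one_pow]
    linear_combination h1 - h2
  have step2 : ∀ j ∈ Icc 1 n, ζ⁻¹ ^ j = ζ ^ (2*n+1-j) := by
    intro j hj
    rw [Finset.mem_Icc] at hj
    rw [inv_pow]
    symm
    apply eq_inv_of_mul_eq_one_left
    rw [← pow_add]
    have : 2*n+1-j + j = 2*n+1 := by omega
    rw [this, hζ.pow_eq_one]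
  have step3 : ∏ j ∈ Icc 1 n, (z + ζ ^ (2*n+1-j)) = ∏ j ∈ Icc (n+1) (2*n), (z + ζ ^ j) := by
    apply Finset.prod_nbij' (i := fun j => 2*n+1-j) (j := fun j => 2*n+1-j) <;>
      intro a ha <;> simp only [Finset.mem_Icc] at * <;> first | omega | (congr 1; omega)
  have step4 : (∏ j ∈ Icc 1 n, (z + ζ ^ j)) * ∏ j ∈ Icc (n+1) (2*n), (z + ζ ^ j)
      = ∏ j ∈ Icc 1 (2*n), (z + ζ ^ j) := by
    rw [← Finset.prod_union (by
      simp only [Finset.disjoint_left, Finset.mem_Icc]; omega)]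
    apply Finset.prod_congr _ fun _ _ => rfl
    ext a; simp only [Finset.mem_union, Finset.mem_Icc]; omega
  have step5 : (z + 1) * ∏ j ∈ Icc 1 (2*n), (z + ζ ^ j)
      = ∏ j ∈ range (2*n+1), (z + ζ ^ j) := by
    have hr : range (2*n+1) = insert 0 (Icc 1 (2*n)) := by
      ext a; simp only [Finset.mem_range, Finset.mem_insert, Finset.mem_Icc]; omega
    rw [hr, Finset.prod_insert (by simp), pow_zero]
  calc z ^ n * (∏ j ∈ Icc 1 n, ((z + z⁻¹) + (ζ ^ j + ζ⁻¹ ^ j))) * (z + 1)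
      = (z + 1) * (z ^ n * ∏ j ∈ Icc 1 n, ((z + z⁻¹) + (ζ ^ j + ζ⁻¹ ^ j))) := by ring
    _ = (z + 1) * ∏ j ∈ Icc 1 n, ((z + ζ ^ j) * (z + ζ ^ (2*n+1-j))) := by
        rw [step1]; congr 1; exact Finset.prod_congr rfl fun j hj => by rw [step2 j hj]
    _ = (z + 1) * ((∏ j ∈ Icc 1 n, (z + ζ ^ j)) * ∏ j ∈ Icc 1 n, (z + ζ ^ (2*n+1-j))) := by
        rw [Finset.prod_mul_distrib]
    _ = (z + 1) * ∏ j ∈ Icc 1 (2*n), (z + ζ ^ j) := by rw [step3, step4]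
    _ = ∏ j ∈ range (2*n+1), (z + ζ ^ j) := step5
    _ = z ^ (2*n+1) + 1 := prod_root n z

lemma two_cos_eq (n j : ℕ) :
    2 * Complex.cos (2 * Real.pi * j / (2 * n + 1)) =
      exp (2 * Real.pi * I / (2*n+1 : ℕ)) ^ j
        + (exp (2 * Real.pi * I / (2*n+1 : ℕ)))⁻¹ ^ j := by
  have h1 : (2 * (Real.pi:ℂ) * j / (2 * n + 1)) * I
      = (j:ℕ) * (2 * Real.pi * I / ((2*n+1 : ℕ):ℂ)) := by push_cast; ring
  have h2 : (-(2 * (Real.pi:ℂ) * j / (2 * n + 1))) * I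
      = (j:ℕ) * (-(2 * Real.pi * I / ((2*n+1 : ℕ):ℂ))) := by push_cast; ring
  simp only [Complex.cos]
  rw [h1, h2, Complex.exp_nat_mul, Complex.exp_nat_mul, Complex.exp_neg]
  ring

lemma P_eq_prod (n : ℕ) :
    P n = ∏ j ∈ Icc 1 n, (X + C (2 * Complex.cos (2 * Real.pi * j / (2 * n + 1)))) := by
  apply Polynomial.eq_of_infinite_eval_eq
  apply Set.infinite_of_injective_forall_mem
    (f := fun m : ℕ => ((m:ℂ) + 2) + ((m:ℂ) + 2)⁻¹)
  · intro a b hab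
    simp only at hab
    have ha : ((a:ℂ) + 2) ≠ 0 := by
      have h' : ((a + 2 : ℕ) : ℂ) ≠ 0 := Nat.cast_ne_zero.mpr (by omega)
      push_cast at h'
      convert h' using 1
    have hb : ((b:ℂ) + 2) ≠ 0 := by
      have h' : ((b + 2 : ℕ) : ℂ) ≠ 0 := Nat.cast_ne_zero.mpr (by omega)
      push_cast at h'
      convert h' using 1
    have key : (((a:ℂ) + 2) - ((b:ℂ) + 2)) * (((a:ℂ)+2) * ((b:ℂ)+2) - 1) = 0 := by
      have h1 := mul_inv_cancel₀ ha
      have h2 := mul_inv_cancel₀ hb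
      field_simp at hab
      linear_combination hab
    rcases mul_eq_zero.1 key with h | h
    · have : ((a:ℂ)) = b := by linear_combination h
      exact_mod_cast this
    · exfalso
      have : (((a+2)*(b+2) : ℕ) : ℂ) = ((1:ℕ) : ℂ) := by push_cast; linear_combination h
      have h5 := Nat.cast_injective (R := ℂ) this
      have h4 : 4 ≤ (a+2)*(b+2) := Nat.mul_le_mul (show 2 ≤ a+2 by omega) (show 2 ≤ b+2 by omega)
      omega
  · intro m
    set z : ℂ := (m:ℂ) + 2 with hzdef
    have hz : z ≠ 0 := by
      have h' : ((m + 2 : ℕ) : ℂ) ≠ 0 := Nat.cast_ne_zero.mpr (by omega)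
      push_cast at h'
      rw [hzdef]; convert h' using 1
    have hz1 : z + 1 ≠ 0 := by
      have h' : ((m + 3 : ℕ) : ℂ) ≠ 0 := Nat.cast_ne_zero.mpr (by omega)
      push_cast at h'
      rw [hzdef]
      intro hcon
      exact h' (by linear_combination hcon)
    have hzn : z ^ n ≠ 0 := pow_ne_zero _ hz
    show (P n).eval (z + z⁻¹) = eval (z + z⁻¹) _
    rw [eval_prod]
    have hA := P_eval_key z hz n
    have hB := prod_eval_key n z hz
    have hprod : ∏ j ∈ Icc 1 n, eval (z + z⁻¹)
        (X + C (2 * Complex.cos (2 * Real.pi * j / (2 * n + 1))))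
        = ∏ j ∈ Icc 1 n, ((z + z⁻¹) +
          (exp (2 * Real.pi * I / (2*n+1 : ℕ)) ^ j
            + (exp (2 * Real.pi * I / (2*n+1 : ℕ)))⁻¹ ^ j)) := by
      refine Finset.prod_congr rfl fun j _ => ?_
      rw [eval_add, eval_X, eval_C, two_cos_eq]
    rw [hprod]
    have := hA.trans hB.symm
    have h2 := mul_right_cancel₀ hz1 this
    exact mul_left_cancel₀ hzn h2


theorem main_thm
    (k : ℕ) (hk : 1 ≤ k) (ε : ℤ) (hε : ε = 1 ∨ ε = -1)
    (x y : Matrix.SpecialLinearGroup (Fin 2) ℂ) :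
    Matrix.trace
      ((x ^ 2 * (x ^ 2 * y * x ^ (2 * ε) * y⁻¹) ^ k :
        Matrix.SpecialLinearGroup (Fin 2) ℂ) : Matrix (Fin 2) (Fin 2) ℂ)
    = (Matrix.trace ((x : Matrix (Fin 2) (Fin 2) ℂ)) ^ 2 - 2)
        * ∏ j ∈ Finset.Icc 1 k,
            (Matrix.trace (((x ^ 2 * y * x ^ (2 * ε) * y⁻¹) :
                Matrix.SpecialLinearGroup (Fin 2) ℂ) : Matrix (Fin 2) (Fin 2) ℂ)
              + 2 * Complex.cos (2 * Real.pi * j / (2 * k + 1))) := by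
  set g : Matrix.SpecialLinearGroup (Fin 2) ℂ := x ^ 2 * y * x ^ (2 * ε) * y⁻¹ with hg
  have hginv : tr (x ^ 2 * g⁻¹) = tr (x ^ 2) := by
    have hconj : x ^ 2 * g⁻¹ = (x ^ 2 * y) * x ^ (-(2 * ε)) * (x ^ 2 * y)⁻¹ := by
      rw [hg]; group
    rw [hconj, tr_conj]
    rcases hε with rfl | rfl
    · have h2 : x ^ (-(2 * (1:ℤ))) = (x ^ 2)⁻¹ := by
        rw [show -(2 * (1:ℤ)) = -2 by norm_num, _root_.zpow_neg]
        norm_cast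
      rw [h2, tr_inv]
    · have h2 : x ^ (-(2 * (-1:ℤ))) = x ^ 2 := by
        rw [show -(2 * (-1:ℤ)) = 2 by norm_num]
        norm_cast
      rw [h2]
  have hrec : ∀ n : ℕ, tr (x ^ 2 * g ^ n) = tr (x ^ 2) * (P n).eval (tr g) := by
    intro n
    induction n using Nat.twoStepInduction with
    | zero => simp [P]
    | one =>
      have h1 := tr_mul_add_tr_mul_inv (x ^ 2) g
      rw [hginv] at h1
      simp only [P, eval_sub, eval_X, eval_one, pow_one]
      linear_combination h1
    | more n ih2 ih1 =>
      have h1 := tr_mul_add_tr_mul_inv (x ^ 2 * g ^ (n+1)) g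
      have e1 : x ^ 2 * g ^ (n+1) * g = x ^ 2 * g ^ (n+2) := by
        rw [pow_succ (n := n+1), mul_assoc]
      have e2 : x ^ 2 * g ^ (n+1) * g⁻¹ = x ^ 2 * g ^ n := by
        group
      rw [e1, e2] at h1
      have e3 : (P (n+2)).eval (tr g) = tr g * (P (n+1)).eval (tr g) - (P n).eval (tr g) := by
        simp [P]
      rw [e3]
      linear_combination h1 - ih2 + tr g * ih1
  show tr (x ^ 2 * g ^ k) = (tr x ^ 2 - 2) * _
  rw [hrec k, tr_sq, P_eq_prod k, eval_prod]
  congr 1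
  exact Finset.prod_congr rfl fun j _ => by rw [eval_add, eval_X, eval_C]; rfl

end Lemma22

/-- Fully factorized form of Lemma 2.2 over ℂ: for `x, y ∈ SL₂(ℂ)`, `ε = ±1`,
`y₁ = x²·y·x^{2ε}·y⁻¹` and `k ≥ 1`,
`tr(x² · y₁^k) = (tr(x)² - 2) · ∏_{j=1}^{k} (tr(y₁) + 2·cos(2πj/(2k+1)))`. -/
theorem trace_sq_mul_pow_eq_prod_cos
    (k : ℕ) (hk : 1 ≤ k) (ε : ℤ) (hε : ε = 1 ∨ ε = -1)
    (x y : Matrix.SpecialLinearGroup (Fin 2) ℂ) :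
    Matrix.trace
      ((x ^ 2 * (x ^ 2 * y * x ^ (2 * ε) * y⁻¹) ^ k :
        Matrix.SpecialLinearGroup (Fin 2) ℂ) : Matrix (Fin 2) (Fin 2) ℂ)
    = (Matrix.trace ((x : Matrix (Fin 2) (Fin 2) ℂ)) ^ 2 - 2)
        * ∏ j ∈ Finset.Icc 1 k,
            (Matrix.trace (((x ^ 2 * y * x ^ (2 * ε) * y⁻¹) :
                Matrix.SpecialLinearGroup (Fin 2) ℂ) : Matrix (Fin 2) (Fin 2) ℂ)
              + 2 * Complex.cos (2 * Real.pi * j / (2 * k + 1))) :=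
  Lemma22.main_thm k hk ε hε x y
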